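/- Complex-place conductor bound (core of Lemma 26): Let ν₁, ν₂ ∈ ℂ with |Re(ν₁)| ≤ 1/2 and |Re(ν₂)| ≤ 1/2, and k₁, k₂ ∈ ℤ. Then (1 + |ν₂ - ν₁ + |k₂ - k₁|/2|)² ≤ 9·(1 + |ν₁ + |k₁|/2|)²·(1 + |ν₂ + |k₂|/2|)². -/

import Mathlib

/-- Core of Lemma 26 (complex place): with Jacquet–Shalika bounds on `Re ν_i`,
`C_v(χ_v) ≤ 9 C_v(σ_1)C_v(σ_2)`. -/
theorem stmt_10 (ν₁ ν₂ : ℂ) (h₁ : |ν₁.re| ≤ 1 / 2) (h₂ : |ν₂.re| ≤ 1 / 2)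
    (k₁ k₂ : ℤ) :
    (1 + ‖ν₂ - ν₁ + ((|k₂ - k₁| : ℝ) / 2 : ℝ)‖) ^ 2 ≤
      9 * (1 + ‖ν₁ + ((|k₁| : ℝ) / 2 : ℝ)‖) ^ 2 *
        (1 + ‖ν₂ + ((|k₂| : ℝ) / 2 : ℝ)‖) ^ 2 := by
  set A := ‖ν₁ + ((|k₁| : ℝ) / 2 : ℝ)‖ with hAdef
  set B := ‖ν₂ + ((|k₂| : ℝ) / 2 : ℝ)‖ with hBdef
  have hA0 : 0 ≤ A := norm_nonneg _
  have hB0 : 0 ≤ B := norm_nonneg _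
  -- |k₁| ≤ 2A + 1
  have hreA : (ν₁ + ((|k₁| : ℝ) / 2 : ℝ)).re = ν₁.re + (|k₁| : ℝ) / 2 := by simp
  have h1 : ν₁.re + (|k₁| : ℝ) / 2 ≤ A := by
    rw [hAdef]
    calc ν₁.re + (|k₁| : ℝ) / 2 = (ν₁ + ((|k₁| : ℝ) / 2 : ℝ)).re := hreA.symm
    _ ≤ ‖_‖ := Complex.re_le_norm _
  have hre1 : -(1/2) ≤ ν₁.re := by
    have := abs_le.mp h₁; linarith [this.1]
  have hk1 : (|k₁| : ℝ) ≤ 2 * A + 1 := by linarith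
  -- triangle inequality
  have hd0 : (0:ℝ) ≤ ((|k₂ - k₁| : ℝ) - (|k₂| : ℝ) + (|k₁| : ℝ)) := by
    have : |k₂| - |k₁| ≤ |k₂ - k₁| := by
      have := abs_sub_abs_le_abs_sub k₂ k₁; linarith
    have := (Int.cast_le (R := ℝ)).mpr this
    push_cast at this ⊢; linarith
  have hd2 : ((|k₂ - k₁| : ℝ) - (|k₂| : ℝ) + (|k₁| : ℝ)) ≤ 2 * (|k₁| : ℝ) := by
    have : |k₂ - k₁| ≤ |k₂| + |k₁| := abs_sub k₂ k₁
    have := (Int.cast_le (R := ℝ)).mpr this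
    push_cast at this ⊢; linarith
  have hsplit : (ν₂ - ν₁ + ((|k₂ - k₁| : ℝ) / 2 : ℝ))
      = (ν₂ + ((|k₂| : ℝ) / 2 : ℝ)) - (ν₁ + ((|k₁| : ℝ) / 2 : ℝ))
        + ((((|k₂ - k₁| : ℝ) - (|k₂| : ℝ) + (|k₁| : ℝ)) / 2 : ℝ) : ℂ) := by
    push_cast
    ring
  have htri : ‖ν₂ - ν₁ + ((|k₂ - k₁| : ℝ) / 2 : ℝ)‖
      ≤ B + A + ((|k₂ - k₁| : ℝ) - (|k₂| : ℝ) + (|k₁| : ℝ)) / 2 := by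
    rw [hsplit]
    refine (norm_add_le _ _).trans ?_
    have h2 : ‖(ν₂ + ((|k₂| : ℝ) / 2 : ℝ)) - (ν₁ + ((|k₁| : ℝ) / 2 : ℝ))‖ ≤ B + A :=
      norm_sub_le _ _
    have h3 : ‖((((|k₂ - k₁| : ℝ) - (|k₂| : ℝ) + (|k₁| : ℝ)) / 2 : ℝ) : ℂ)‖
        = ((|k₂ - k₁| : ℝ) - (|k₂| : ℝ) + (|k₁| : ℝ)) / 2 := by
      rw [Complex.norm_of_nonneg (by linarith)]
    rw [h3]
    linarith
  have hL0 : 0 ≤ ‖ν₂ - ν₁ + ((|k₂ - k₁| : ℝ) / 2 : ℝ)‖ := norm_nonneg _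
  have key : 1 + ‖ν₂ - ν₁ + ((|k₂ - k₁| : ℝ) / 2 : ℝ)‖ ≤ 3 * (1 + A) * (1 + B) := by
    nlinarith [mul_nonneg hA0 hB0]
  calc (1 + ‖ν₂ - ν₁ + ((|k₂ - k₁| : ℝ) / 2 : ℝ)‖) ^ 2
      ≤ (3 * (1 + A) * (1 + B)) ^ 2 := by
        apply pow_le_pow_left₀ (by linarith) key
    _ = 9 * (1 + A) ^ 2 * (1 + B) ^ 2 := by ring
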